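/- arXiv:2602.06315 — 4 statements merged into one kernel-verified Lean document; each statement's English description precedes it below -/
import Mathlib

section
/- For any real number $a \neq 0$, real number $b$, nonnegative integer $n$, and complex number $s$ with sufficiently large real part, the Mellin-type integral $\int_0^\infty t^s H_n(at+b) e^{-(at+b)^2} \frac{dt}{t}$ equals $a^{-n} \frac{\Gamma(s)}{\Gamma(s-n)} \int_0^\infty t^{s-n} e^{-(at+b)^2} \frac{dt}{t}$, where $H_n$ is the $n$-th (physicists') Hermite polynomial. -/
open MeasureTheory Complex

/-- The `n`-th (physicists') Hermite polynomial `H_n(x) = (-1)^n e^{x^2} (d/dx)^n e^{-x^2}`. -/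
noncomputable def hermiteH (n : ℕ) (x : ℝ) : ℝ :=
  (-1) ^ n * Real.exp (x ^ 2) * iteratedDeriv n (fun y => Real.exp (-(y ^ 2))) x

open Polynomial Filter Topology Set Asymptotics

namespace HermAux

noncomputable def q : ℕ → Polynomial ℝ
  | 0 => 1
  | n+1 => derivative (q n) - Polynomial.C 2 * Polynomial.X * q n

lemma hasDerivAt_q (n : ℕ) (x : ℝ) :
    HasDerivAt (fun x => (q n).eval x * Real.exp (-(x ^ 2)))
      ((q (n+1)).eval x * Real.exp (-(x ^ 2))) x := by
  have h1 : HasDerivAt (fun x : ℝ => -(x ^ 2)) (-(2 * x)) x := by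
    simpa using (hasDerivAt_pow 2 x).fun_neg
  have h3 := ((q n).hasDerivAt x).mul h1.exp
  refine h3.congr_deriv ?_
  simp only [q, eval_sub, eval_mul, eval_C, eval_X]
  ring

lemma iteratedDeriv_gaussian (n : ℕ) (x : ℝ) :
    iteratedDeriv n (fun y => Real.exp (-(y ^ 2))) x = (q n).eval x * Real.exp (-(x ^ 2)) := by
  induction n generalizing x with
  | zero => simp [q]
  | succ n ih =>
    rw [iteratedDeriv_succ]
    have h : iteratedDeriv n (fun y => Real.exp (-(y ^ 2)))
        = fun x => (q n).eval x * Real.exp (-(x ^ 2)) := funext ih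
    rw [h]
    exact (hasDerivAt_q n x).deriv

lemma tendsto_poly_gauss_atTop (p : Polynomial ℝ) :
    Tendsto (fun x => p.eval x * Real.exp (-(x ^ 2))) atTop (𝓝 0) := by
  apply squeeze_zero_norm' (a := fun x => |p.eval x / Real.exp x|)
  · filter_upwards [eventually_ge_atTop (1 : ℝ)] with x hx
    rw [norm_mul, Real.norm_eq_abs, Real.norm_eq_abs, Real.abs_exp, abs_div,
      Real.abs_exp, div_eq_mul_inv, ← Real.exp_neg]
    have hexp : Real.exp (-(x ^ 2)) ≤ Real.exp (-x) := Real.exp_le_exp.2 (by nlinarith)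
    exact mul_le_mul_of_nonneg_left hexp (abs_nonneg _)
  · simpa using (p.tendsto_div_exp_atTop).abs

lemma tendsto_poly_gauss_atBot (p : Polynomial ℝ) :
    Tendsto (fun x => p.eval x * Real.exp (-(x ^ 2))) atBot (𝓝 0) := by
  have h := (tendsto_poly_gauss_atTop (p.comp (-Polynomial.X))).comp tendsto_neg_atBot_atTop
  refine h.congr fun x => ?_
  simp [eval_comp]

lemma tendsto_affine_gauss (p : Polynomial ℝ) {a : ℝ} (ha : a ≠ 0) (b : ℝ) :
    Tendsto (fun t => p.eval (a * t + b) * Real.exp (-((a * t + b) ^ 2))) atTop (𝓝 0) := by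
  rcases ha.lt_or_gt with h | h
  · have haff : Tendsto (fun t : ℝ => a * t + b) atTop atBot :=
      tendsto_atBot_add_const_right atTop b ((tendsto_const_mul_atBot_of_neg h).2 tendsto_id)
    exact (tendsto_poly_gauss_atBot p).comp haff
  · have haff : Tendsto (fun t : ℝ => a * t + b) atTop atTop :=
      tendsto_atTop_add_const_right atTop b (tendsto_id.const_mul_atTop h)
    exact (tendsto_poly_gauss_atTop p).comp haff

lemma tendsto_pow_mul_affine_gauss (p : Polynomial ℝ) {a : ℝ} (ha : a ≠ 0) (b : ℝ) (k : ℕ) :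
    Tendsto (fun t => t ^ k * (p.eval (a * t + b) * Real.exp (-((a * t + b) ^ 2))))
      atTop (𝓝 0) := by
  have h := tendsto_affine_gauss ((Polynomial.C a⁻¹ * (Polynomial.X - Polynomial.C b)) ^ k * p)
    ha b
  refine h.congr fun t => ?_
  have : a⁻¹ * (a * t + b - b) = t := by field_simp; ring
  simp only [eval_mul, eval_pow, eval_sub, eval_C, eval_X, this]
  ring

lemma continuous_affine_gauss (p : Polynomial ℝ) (a b : ℝ) :
    Continuous (fun t => p.eval (a * t + b) * Real.exp (-((a * t + b) ^ 2))) := by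
  exact (p.continuous.comp (by fun_prop)).mul (Real.continuous_exp.comp (by fun_prop))

lemma isBigO_rpow_top (p : Polynomial ℝ) {a : ℝ} (ha : a ≠ 0) (b : ℝ) (k : ℕ) :
    (fun t => p.eval (a * t + b) * Real.exp (-((a * t + b) ^ 2)))
      =O[atTop] fun t : ℝ => t ^ (-(k : ℝ)) := by
  set g := fun t => p.eval (a * t + b) * Real.exp (-((a * t + b) ^ 2)) with hg
  have h1 : (fun t => t ^ k * g t) =O[atTop] (fun _ => (1 : ℝ)) :=
    (tendsto_pow_mul_affine_gauss p ha b k).isBigO_one ℝ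
  have h2 : (fun t : ℝ => t ^ (-(k : ℝ)) * (t ^ k * g t))
      =O[atTop] (fun t : ℝ => t ^ (-(k : ℝ)) * 1) :=
    (isBigO_refl _ _).mul h1
  refine h2.congr' ?_ ?_
  · filter_upwards [eventually_gt_atTop (0 : ℝ)] with t ht
    rw [Real.rpow_neg ht.le, Real.rpow_natCast, inv_mul_cancel_left₀ (by positivity)]
  · filter_upwards with t
    rw [mul_one]

lemma integrable_cpow_gauss (p : Polynomial ℝ) {a : ℝ} (ha : a ≠ 0) (b : ℝ) {σ : ℂ}
    (hσ : 0 < σ.re) :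
    IntegrableOn (fun t : ℝ =>
        (t : ℂ) ^ (σ - 1) * ((p.eval (a * t + b) * Real.exp (-((a * t + b) ^ 2)) : ℝ) : ℂ))
      (Ioi 0) := by
  set g := fun t => p.eval (a * t + b) * Real.exp (-((a * t + b) ^ 2)) with hg
  set k : ℕ := ⌊σ.re⌋₊ + 1 with hk
  have hσk : σ.re < (k : ℝ) := by
    push_cast [hk]
    exact Nat.lt_floor_add_one _
  have hmc : MellinConvergent (fun t : ℝ => ((g t : ℝ) : ℂ)) σ := by
    refine mellinConvergent_of_isBigO_rpow (a := (k : ℝ)) (b := 0) ?_ ?_ hσk ?_ hσ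
    · exact ((Complex.continuous_ofReal.comp
        (continuous_affine_gauss p a b)).locallyIntegrable).locallyIntegrableOn _
    · refine IsBigO.of_norm_left ?_
      have hn : (fun t : ℝ => ‖((g t : ℝ) : ℂ)‖) = fun t => ‖g t‖ :=
        funext fun t => Complex.norm_real _
      rw [hn]
      exact (isBigO_rpow_top p ha b k).norm_left
    · have hc : Tendsto (fun t : ℝ => ((g t : ℝ) : ℂ)) (𝓝[>] 0) (𝓝 ((g 0 : ℝ) : ℂ)) :=
        ((Complex.continuous_ofReal.comp (continuous_affine_gauss p a b)).tendsto 0).mono_left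
          nhdsWithin_le_nhds
      have h4 : (fun t : ℝ => ((g t : ℝ) : ℂ)) =O[𝓝[>] (0:ℝ)] (fun _ => (1 : ℝ)) :=
        hc.isBigO_one ℝ
      refine h4.congr' (EventuallyEq.refl _ _) ?_
      filter_upwards with t
      simp
  simpa only [MellinConvergent, smul_eq_mul] using hmc

lemma tendsto_boundary_top (p : Polynomial ℝ) {a : ℝ} (ha : a ≠ 0) (b : ℝ) (σ : ℂ) :
    Tendsto (fun t : ℝ =>
        (t : ℂ) ^ σ * ((p.eval (a * t + b) * Real.exp (-((a * t + b) ^ 2)) : ℝ) : ℂ))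
      atTop (𝓝 0) := by
  set g := fun t => p.eval (a * t + b) * Real.exp (-((a * t + b) ^ 2)) with hg
  set k : ℕ := ⌊σ.re⌋₊ + 1 with hk
  have hσk : σ.re ≤ (k : ℝ) := by
    push_cast [hk]
    exact (Nat.lt_floor_add_one _).le
  apply squeeze_zero_norm' (a := fun t => |t ^ k * g t|)
  · filter_upwards [eventually_ge_atTop (1 : ℝ)] with t ht
    have ht0 : (0 : ℝ) < t := lt_of_lt_of_le one_pos ht
    rw [norm_mul, Complex.norm_cpow_eq_rpow_re_of_pos ht0, Complex.norm_real, Real.norm_eq_abs]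
    simp only [hg, abs_mul, abs_of_pos ht0, abs_of_pos (pow_pos ht0 k)]
    have h1 : t ^ σ.re ≤ t ^ (k : ℝ) := Real.rpow_le_rpow_of_exponent_le ht hσk
    rw [Real.rpow_natCast] at h1
    exact mul_le_mul_of_nonneg_right h1 (mul_nonneg (abs_nonneg _) (abs_nonneg _))
  · simpa [hg] using (tendsto_pow_mul_affine_gauss p ha b k).abs

lemma tendsto_boundary_zero (p : Polynomial ℝ) (a b : ℝ) {σ : ℂ} (hσ : 0 < σ.re) :
    Tendsto (fun t : ℝ =>
        (t : ℂ) ^ σ * ((p.eval (a * t + b) * Real.exp (-((a * t + b) ^ 2)) : ℝ) : ℂ))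
      (𝓝[>] (0 : ℝ)) (𝓝 0) := by
  set g := fun t => p.eval (a * t + b) * Real.exp (-((a * t + b) ^ 2)) with hg
  have h1 : Tendsto (fun t : ℝ => (t : ℂ) ^ σ) (𝓝[>] (0 : ℝ)) (𝓝 0) := by
    rw [tendsto_zero_iff_norm_tendsto_zero]
    have h2 : Tendsto (fun t : ℝ => t ^ σ.re) (𝓝[>] (0 : ℝ)) (𝓝 0) := by
      have h3 := (Real.continuousAt_rpow_const 0 σ.re (Or.inr hσ.le)).tendsto
      rw [Real.zero_rpow hσ.ne'] at h3
      exact h3.mono_left nhdsWithin_le_nhds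
    refine h2.congr' ?_
    filter_upwards [self_mem_nhdsWithin] with t (ht : (0:ℝ) < t)
    rw [Complex.norm_cpow_eq_rpow_re_of_pos ht]
  have h2 : Tendsto (fun t : ℝ => ((g t : ℝ) : ℂ)) (𝓝[>] (0 : ℝ)) (𝓝 ((g 0 : ℝ) : ℂ)) :=
    ((Complex.continuous_ofReal.comp (continuous_affine_gauss p a b)).tendsto 0).mono_left
      nhdsWithin_le_nhds
  simpa only [zero_mul] using h1.mul h2

lemma ibp_step {a : ℝ} (ha : a ≠ 0) (b : ℝ) (m : ℕ) {s : ℂ} (hs : (m + 1 : ℝ) < s.re) :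
    (∫ t in Ioi (0:ℝ), (t:ℂ)^(s-1) *
        (((q (m+1)).eval (a*t+b) * Real.exp (-((a*t+b)^2)) : ℝ) : ℂ))
      = (-(s-1)/a) * ∫ t in Ioi (0:ℝ), (t:ℂ)^(s-1-1) *
          (((q m).eval (a*t+b) * Real.exp (-((a*t+b)^2)) : ℝ) : ℂ) := by
  have hs1 : (0:ℝ) < (s-1).re := by
    simp only [Complex.sub_re, Complex.one_re]
    have : (0:ℝ) ≤ m := Nat.cast_nonneg m
    linarith
  have hs0 : (0:ℝ) < s.re := by
    have : (0:ℝ) ≤ m := Nat.cast_nonneg m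
    linarith
  set u : ℝ → ℂ := fun t => (t:ℂ)^(s-1) with hu_def
  set u' : ℝ → ℂ := fun t => (s-1) * (t:ℂ)^(s-1-1) with hu'_def
  set v : ℝ → ℂ := fun t =>
    (((q m).eval (a*t+b) * Real.exp (-((a*t+b)^2)) : ℝ) : ℂ) with hv_def
  set v' : ℝ → ℂ := fun t =>
    ((a * ((q (m+1)).eval (a*t+b) * Real.exp (-((a*t+b)^2))) : ℝ) : ℂ) with hv'_def
  have hu : ∀ x ∈ Ioi (0:ℝ), HasDerivAt u (u' x) x := by
    intro x hx
    have h0 : ((x:ℝ):ℂ) ∈ slitPlane := ofReal_mem_slitPlane.2 hx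
    have h := ((hasDerivAt_id ((x:ℝ):ℂ)).cpow_const (c := s-1) h0).comp_ofReal
    simpa [hu_def, hu'_def, mul_one] using h
  have hv : ∀ x ∈ Ioi (0:ℝ), HasDerivAt v (v' x) x := by
    intro x _
    have haff : HasDerivAt (fun t : ℝ => a * t + b) a x := by
      simpa using ((hasDerivAt_id x).const_mul a).add_const b
    have hG := (hasDerivAt_q m (a*x+b)).comp x haff
    have hG' : HasDerivAt (fun t : ℝ => (q m).eval (a*t+b) * Real.exp (-((a*t+b)^2)))
        (a * ((q (m+1)).eval (a*x+b) * Real.exp (-((a*x+b)^2)))) x := by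
      refine hG.congr_deriv ?_
      ring
    exact hG'.ofReal_comp
  have huv' : IntegrableOn (u * v') (Ioi (0:ℝ)) := by
    have hbase : IntegrableOn (fun x : ℝ => (a:ℂ) * ((x:ℂ)^(s-1) *
        (((q (m+1)).eval (a*x+b) * Real.exp (-((a*x+b)^2)) : ℝ) : ℂ))) (Ioi (0:ℝ)) :=
      (integrable_cpow_gauss (q (m+1)) ha b (σ := s) hs0).const_mul (a:ℂ)
    refine hbase.congr_fun (fun x _ => ?_) measurableSet_Ioi
    simp only [hu_def, hv'_def, Pi.mul_apply]
    push_cast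
    ring
  have hu'v : IntegrableOn (u' * v) (Ioi (0:ℝ)) := by
    have hbase : IntegrableOn (fun x : ℝ => (s-1) * ((x:ℂ)^(s-1-1) *
        (((q m).eval (a*x+b) * Real.exp (-((a*x+b)^2)) : ℝ) : ℂ))) (Ioi (0:ℝ)) :=
      (integrable_cpow_gauss (q m) ha b (σ := s-1) hs1).const_mul (s-1)
    refine hbase.congr_fun (fun x _ => ?_) measurableSet_Ioi
    simp only [hu'_def, hv_def, Pi.mul_apply]
    ring
  have h_zero : Tendsto (u * v) (𝓝[>] (0:ℝ)) (𝓝 0) := by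
    have := tendsto_boundary_zero (q m) a b (σ := s-1) hs1
    simpa [hu_def, hv_def, Pi.mul_def] using this
  have h_infty : Tendsto (u * v) atTop (𝓝 0) := by
    have := tendsto_boundary_top (q m) ha b (s-1)
    simpa [hu_def, hv_def, Pi.mul_def] using this
  have key := integral_Ioi_mul_deriv_eq_deriv_mul hu hv huv' hu'v h_zero h_infty
  have hL : (∫ x in Ioi (0:ℝ), u x * v' x)
      = (a:ℂ) * ∫ t in Ioi (0:ℝ), (t:ℂ)^(s-1) *
          (((q (m+1)).eval (a*t+b) * Real.exp (-((a*t+b)^2)) : ℝ) : ℂ) := by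
    rw [← integral_const_mul]
    refine setIntegral_congr_fun measurableSet_Ioi fun x _ => ?_
    simp only [hu_def, hv'_def]
    push_cast
    ring
  have hR : (∫ x in Ioi (0:ℝ), u' x * v x)
      = (s-1) * ∫ t in Ioi (0:ℝ), (t:ℂ)^(s-1-1) *
          (((q m).eval (a*t+b) * Real.exp (-((a*t+b)^2)) : ℝ) : ℂ) := by
    rw [← integral_const_mul]
    refine setIntegral_congr_fun measurableSet_Ioi fun x _ => ?_
    simp only [hu'_def, hv_def]
    ring
  rw [hL, hR] at key
  have ha' : (a:ℂ) ≠ 0 := ofReal_ne_zero.2 ha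
  field_simp at key ⊢
  linear_combination key

lemma mellin_rec {a : ℝ} (ha : a ≠ 0) (b : ℝ) :
    ∀ (n : ℕ) (s : ℂ), (n:ℝ) < s.re →
    (∫ t in Ioi (0:ℝ), (t:ℂ)^(s-1) *
        (((q n).eval (a*t+b) * Real.exp (-((a*t+b)^2)) : ℝ) : ℂ))
      = (-1/a)^n * (∏ k ∈ Finset.range n, (s-1-k)) *
          ∫ t in Ioi (0:ℝ), (t:ℂ)^(s-(n:ℂ)-1) * ((Real.exp (-((a*t+b)^2)) : ℝ) : ℂ) := by
  intro n
  induction n with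
  | zero => intro s _; simp [q]
  | succ n ih =>
    intro s hs
    have hs' : ((n:ℝ) + 1) < s.re := by push_cast at hs; linarith
    have h1 := ibp_step ha b n (s := s) hs'
    have h2 := ih (s-1) (by
      simp only [Complex.sub_re, Complex.one_re]; linarith)
    rw [h1, h2]
    have hint : s - 1 - (n:ℂ) - 1 = s - ((n+1 : ℕ):ℂ) - 1 := by push_cast; ring
    rw [hint]
    rw [Finset.prod_range_succ']
    have hprod : (∏ k ∈ Finset.range n, (s - 1 - ((k+1 : ℕ):ℂ)))
        = ∏ k ∈ Finset.range n, (s - 1 - 1 - (k:ℂ)) :=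
      Finset.prod_congr rfl fun k _ => by push_cast; ring
    rw [hprod]
    push_cast
    ring

lemma gamma_prod : ∀ (n : ℕ) (s : ℂ), (n:ℝ) < s.re →
    Complex.Gamma s = (∏ k ∈ Finset.range n, (s-1-k)) * Complex.Gamma (s - n)
  | 0, s, _ => by simp
  | n+1, s, hs => by
    have h0 : (n:ℝ) < s.re := by push_cast at hs; linarith
    have ih := gamma_prod n s h0
    have hzre : 0 < (s - ((n:ℂ)+1)).re := by
      simp only [Complex.sub_re, Complex.add_re, Complex.one_re, Complex.natCast_re]
      push_cast at hs; linarith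
    have hz : s - ((n:ℂ)+1) ≠ 0 := by
      intro h; rw [h] at hzre; simp at hzre
    have hstep : Complex.Gamma (s - n) = (s - ((n:ℂ)+1)) * Complex.Gamma (s - ((n:ℂ)+1)) := by
      have h := Complex.Gamma_add_one (s - ((n:ℂ)+1)) hz
      rw [← h]
      congr 1
      ring
    rw [ih, hstep, Finset.prod_range_succ]
    have : ((n+1 : ℕ):ℂ) = (n:ℂ)+1 := by push_cast; ring
    rw [this]
    ring

end HermAux

open HermAux

lemma hermiteH_eq (n : ℕ) (x : ℝ) : hermiteH n x = (-1)^n * (q n).eval x := by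
  rw [hermiteH, iteratedDeriv_gaussian]
  have h : Real.exp (x^2) * Real.exp (-(x^2)) = 1 := by
    rw [← Real.exp_add, add_neg_cancel, Real.exp_zero]
  linear_combination ((-1:ℝ)^n * (q n).eval x) * h

theorem stmt_0 (a : ℝ) (ha : a ≠ 0) (b : ℝ) (n : ℕ) (s : ℂ) (hs : (n : ℝ) < s.re) :
    ∫ t in Set.Ioi (0 : ℝ),
        (t : ℂ) ^ s * (hermiteH n (a * t + b) * Real.exp (-(a * t + b) ^ 2) / t)
      = (a : ℂ) ^ (-(n : ℤ)) * (Complex.Gamma s / Complex.Gamma (s - n)) *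
          ∫ t in Set.Ioi (0 : ℝ), (t : ℂ) ^ (s - n) * (Real.exp (-(a * t + b) ^ 2) / t) := by
  have hL : (∫ t in Set.Ioi (0 : ℝ),
        (t : ℂ) ^ s * (hermiteH n (a * t + b) * Real.exp (-(a * t + b) ^ 2) / t))
      = (-1:ℂ)^n * ∫ t in Ioi (0:ℝ), (t:ℂ)^(s-1) *
          (((q n).eval (a*t+b) * Real.exp (-((a*t+b)^2)) : ℝ) : ℂ) := by
    rw [← integral_const_mul]
    refine setIntegral_congr_fun measurableSet_Ioi fun t ht => ?_
    have ht' : (t:ℂ) ≠ 0 := ofReal_ne_zero.2 (ne_of_gt ht)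
    rw [hermiteH_eq, Complex.cpow_sub _ _ ht', Complex.cpow_one]
    push_cast
    field_simp
  have hR : (∫ t in Set.Ioi (0 : ℝ), (t : ℂ) ^ (s - n) * (Real.exp (-(a * t + b) ^ 2) / t))
      = ∫ t in Ioi (0:ℝ), (t:ℂ)^(s-(n:ℂ)-1) * ((Real.exp (-((a*t+b)^2)) : ℝ) : ℂ) := by
    refine setIntegral_congr_fun measurableSet_Ioi fun t ht => ?_
    have ht' : (t:ℂ) ≠ 0 := ofReal_ne_zero.2 (ne_of_gt ht)
    have hpow : (t:ℂ)^(s-(n:ℂ)-1) = (t:ℂ)^(s-(n:ℂ)) / (t:ℂ) := by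
      rw [Complex.cpow_sub _ _ ht', Complex.cpow_one]
    rw [hpow]
    ring
  rw [hL, hR, mellin_rec ha b n s hs]
  have hGnz : Complex.Gamma (s - n) ≠ 0 := by
    refine Complex.Gamma_ne_zero_of_re_pos ?_
    simp only [Complex.sub_re, Complex.natCast_re]
    linarith
  rw [gamma_prod n s hs, mul_div_assoc, div_self hGnz, mul_one]
  have hpow : (-1:ℂ)^n * (-1/a)^n = (a:ℂ) ^ (-(n:ℤ)) := by
    rw [← mul_pow, zpow_neg, zpow_natCast, ← inv_pow]
    congr 1
    field_simp
  rw [← mul_assoc, ← mul_assoc, hpow]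
end

section
/- For a nonnegative integer $n$, reals $c > 0$ and $b$, the Gaussian-Hermite Fourier identity $\int_{\mathbb{R}} (c + \sqrt{-1}\,u)^n e^{-\pi u^2 - 2\pi\sqrt{-1}\, b u}\, du = (4\pi)^{-n/2} H_n(\pi^{1/2}(c+b)) e^{-\pi b^2}$ holds, where $H_n$ is the $n$-th Hermite polynomial. -/
open MeasureTheory

namespace StmtAux

open Complex

noncomputable def D (k : ℕ) (x : ℝ) : ℝ := iteratedDeriv k (fun y => Real.exp (-(y ^ 2))) x

lemma contDiff_gauss : ContDiff ℝ (⊤ : ℕ∞) (fun y : ℝ => Real.exp (-(y ^ 2))) :=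
  Real.contDiff_exp.comp (contDiff_id.pow 2).neg

lemma contDiff_D (k : ℕ) : ContDiff ℝ (⊤ : ℕ∞) (D k) := by
  unfold D
  rw [iteratedDeriv_eq_iterate]
  exact contDiff_gauss.iterate_deriv k

lemma hasDerivAt_D (k : ℕ) (x : ℝ) : HasDerivAt (D k) (D (k + 1) x) x := by
  have h : DifferentiableAt ℝ (D k) x :=
    ((contDiff_D k).differentiable (by simp)).differentiableAt
  have h2 := h.hasDerivAt
  have : D (k + 1) = deriv (D k) := by unfold D; rw [iteratedDeriv_succ]
  rwa [← this] at h2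

lemma hermiteH_eq (n : ℕ) (x : ℝ) :
    hermiteH n x = (-1) ^ n * Real.exp (x ^ 2) * D n x := rfl

lemma hermiteH_zero (x : ℝ) : hermiteH 0 x = 1 := by
  simp [hermiteH, iteratedDeriv_zero, ← Real.exp_add]

lemma hasDerivAt_hermite_comp (n : ℕ) (c t : ℝ) :
    HasDerivAt (fun y : ℝ => hermiteH n (Real.sqrt Real.pi * (c + y)))
      (2 * Real.pi * (c + t) * hermiteH n (Real.sqrt Real.pi * (c + t))
        - Real.sqrt Real.pi * hermiteH (n + 1) (Real.sqrt Real.pi * (c + t))) t := by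
  set s := Real.sqrt Real.pi with hs
  have hss : s * s = Real.pi := Real.mul_self_sqrt Real.pi_pos.le
  have hu : HasDerivAt (fun y : ℝ => s * (c + y)) s t := by
    simpa using ((hasDerivAt_id t).const_add c).const_mul s
  set u := s * (c + t) with hudef
  have h1 : HasDerivAt (fun y : ℝ => Real.exp ((s * (c + y)) ^ 2))
      (Real.exp (u ^ 2) * (2 * u ^ 1 * s)) t := (hu.pow 2).exp
  have h2 : HasDerivAt (fun y : ℝ => D n (s * (c + y))) (D (n + 1) u * s) t :=
    (hasDerivAt_D n u).comp t hu
  have h3 := ((h1.const_mul ((-1 : ℝ) ^ n)).mul h2)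
  have heq : (fun y : ℝ => hermiteH n (s * (c + y)))
      = fun y : ℝ => (-1 : ℝ) ^ n * Real.exp ((s * (c + y)) ^ 2) * D n (s * (c + y)) := by
    funext y; rw [hermiteH_eq]
  rw [heq]
  refine h3.congr_deriv ?_
  rw [hermiteH_eq, hermiteH_eq]
  have h4 : u = s * (c + t) := rfl
  have h5 : 2 * Real.pi * (c + t) = 2 * u * s := by
    rw [h4]; linear_combination (-2 * (c + t)) * hss
  rw [h5, pow_succ]
  ring

lemma integrable_main (c b : ℝ) (m k : ℕ) :
    Integrable (fun x : ℝ => (x : ℂ) ^ k * ((c : ℂ) + Complex.I * x) ^ m *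
      Complex.exp (-(Real.pi : ℂ) * (x : ℂ) ^ 2 - 2 * (Real.pi : ℂ) * Complex.I * b * x)) := by
  have habs : ∀ i : ℕ, Integrable (fun x : ℝ => |x| ^ i * Real.exp (-Real.pi * x ^ 2)) := by
    intro i
    have h := integrable_rpow_mul_exp_neg_mul_sq (b := Real.pi) Real.pi_pos
      (s := (i : ℝ)) (by exact_mod_cast neg_one_lt_zero.trans_le (Nat.cast_nonneg i))
    refine h.abs.congr ?_
    filter_upwards with x
    rw [abs_mul, Real.rpow_natCast, _root_.abs_pow, abs_of_pos (Real.exp_pos _)]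
  have hbound : Integrable (fun x : ℝ => (|c| + |x|) ^ (m + k) * Real.exp (-Real.pi * x ^ 2)) := by
    have heq : ∀ x : ℝ, (|c| + |x|) ^ (m + k) * Real.exp (-Real.pi * x ^ 2) =
        ∑ j ∈ Finset.range (m + k + 1),
          |c| ^ j * ((m + k).choose j : ℝ) * (|x| ^ (m + k - j) * Real.exp (-Real.pi * x ^ 2)) := by
      intro x
      rw [add_pow, Finset.sum_mul]
      congr 1 with j
      ring
    simp_rw [heq]
    exact integrable_finset_sum _ fun j _ => ((habs (m + k - j)).const_mul _)
  refine hbound.mono' ?_ ?_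
  · apply Continuous.aestronglyMeasurable
    fun_prop
  · filter_upwards with x
    have hre : (-(Real.pi : ℂ) * (x : ℂ) ^ 2 - 2 * (Real.pi : ℂ) * Complex.I * b * x).re
        = -Real.pi * x ^ 2 := by
      simp [Complex.sub_re, Complex.mul_re, Complex.I_re, Complex.I_im, ← Complex.ofReal_pow]
    rw [norm_mul, norm_mul, norm_pow, norm_pow]
    simp only [Complex.norm_exp, hre, Complex.norm_real, Real.norm_eq_abs]
    have h1 : ‖(c : ℂ) + Complex.I * x‖ ≤ |c| + |x| := by
      refine (norm_add_le _ _).trans ?_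
      simp
    have h2 : |x| ≤ |c| + |x| := le_add_of_nonneg_left (abs_nonneg c)
    have e1 : |x| ^ k ≤ (|c| + |x|) ^ k := pow_le_pow_left₀ (abs_nonneg x) h2 k
    have e2 : ‖(c:ℂ) + Complex.I * x‖ ^ m ≤ (|c| + |x|) ^ m :=
      pow_le_pow_left₀ (norm_nonneg _) h1 m
    calc |x| ^ k * ‖(c:ℂ) + Complex.I * x‖ ^ m * Real.exp (-Real.pi * x ^ 2)
        ≤ (|c| + |x|) ^ k * (|c| + |x|) ^ m * Real.exp (-Real.pi * x ^ 2) := by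
          have h3 := Real.exp_pos (-Real.pi * x ^ 2)
          exact mul_le_mul (mul_le_mul e1 e2 (by positivity) (by positivity)) le_rfl h3.le
            (by positivity)
      _ = (|c| + |x|) ^ (m + k) * Real.exp (-Real.pi * x ^ 2) := by rw [← pow_add, add_comm k m]

end StmtAux

open StmtAux Complex

open scoped FourierTransform

theorem stmt_4 (n : ℕ) (c : ℝ) (hc : 0 < c) (b : ℝ) :
    ∫ u : ℝ, ((c : ℂ) + Complex.I * u) ^ n *
        Complex.exp (-(Real.pi : ℂ) * (u : ℂ) ^ 2 - 2 * (Real.pi : ℂ) * Complex.I * b * u)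
      = ((4 * Real.pi : ℝ) : ℂ) ^ (-(n : ℂ) / 2) *
          hermiteH n (Real.sqrt Real.pi * (c + b)) * Real.exp (-Real.pi * b ^ 2) := by
  have hπ : (Real.pi : ℂ) ≠ 0 := Complex.ofReal_ne_zero.mpr Real.pi_ne_zero
  induction n generalizing b with
  | zero =>
    have h := fourierIntegral_gaussian (b := (Real.pi : ℂ))
      (by simpa using Real.pi_pos) (-2 * (Real.pi : ℂ) * b)
    have hcongr : (fun u : ℝ => ((c : ℂ) + Complex.I * u) ^ 0 *
        Complex.exp (-(Real.pi : ℂ) * (u : ℂ) ^ 2 - 2 * (Real.pi : ℂ) * Complex.I * b * u))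
        = fun x : ℝ => Complex.exp (Complex.I * (-2 * (Real.pi : ℂ) * b) * x) *
            Complex.exp (-(Real.pi : ℂ) * x ^ 2) := by
      funext x
      rw [pow_zero, one_mul, ← Complex.exp_add]
      congr 1
      ring
    rw [hcongr, h, div_self hπ, one_cpow, one_mul]
    have harg : -(-2 * (Real.pi : ℂ) * b) ^ 2 / (4 * Real.pi) = ((-Real.pi * b ^ 2 : ℝ) : ℂ) := by
      push_cast
      field_simp
      ring
    rw [harg, ← Complex.ofReal_exp]
    simp [hermiteH_zero]
  | succ n IH =>
    set s := Real.sqrt Real.pi with hsdef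
    have hs0 : 0 < s := Real.sqrt_pos.mpr Real.pi_pos
    have hss : s * s = Real.pi := Real.mul_self_sqrt Real.pi_pos.le
    set A : ℂ := ((4 * Real.pi : ℝ) : ℂ) ^ (-(n : ℂ) / 2) with hA
    set F : ℝ → ℂ := fun x : ℝ =>
      ((c : ℂ) + Complex.I * x) ^ n * Complex.exp (-(Real.pi : ℂ) * (x:ℂ) ^ 2) with hFdef
    have hF : Integrable F := by
      have h := integrable_main c 0 n 0
      simpa [hFdef] using h
    have hF' : Integrable (fun x : ℝ => x • F x) := by
      have h := (integrable_main c 0 n 1)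
      refine h.congr (Filter.Eventually.of_forall fun x => ?_)
      simp only [hFdef, Complex.real_smul, Complex.ofReal_zero, mul_zero, zero_mul, sub_zero,
        pow_one]
      ring_nf
    have hkey := Real.hasDerivAt_fourier hF hF' b
    have hFour1 : ∀ w : ℝ, 𝓕 F w = ∫ x : ℝ, ((c : ℂ) + Complex.I * x) ^ n *
        Complex.exp (-(Real.pi : ℂ) * (x : ℂ) ^ 2 - 2 * (Real.pi : ℂ) * Complex.I * w * x) := by
      intro w
      rw [Real.fourier_real_eq_integral_exp_smul]
      refine integral_congr_ae (Filter.Eventually.of_forall fun x => ?_)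
      simp only [smul_eq_mul, hFdef]
      have hsplitexp : Complex.exp (-(Real.pi : ℂ) * (x : ℂ) ^ 2 - 2 * (Real.pi : ℂ) * Complex.I * w * x)
          = Complex.exp ((↑(-2 * Real.pi * x * w) : ℂ) * Complex.I)
            * Complex.exp (-(Real.pi : ℂ) * (x:ℂ) ^ 2) := by
        rw [← Complex.exp_add]
        congr 1
        push_cast
        ring
      rw [hsplitexp]
      ring
    have hFour2 : 𝓕 (fun x : ℝ => (-2 * (Real.pi:ℂ) * Complex.I * x) • F x) b
        = ∫ x : ℝ, (-2 * (Real.pi:ℂ) * Complex.I * x) * (((c : ℂ) + Complex.I * x) ^ n *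
          Complex.exp (-(Real.pi : ℂ) * (x : ℂ) ^ 2 - 2 * (Real.pi : ℂ) * Complex.I * b * x)) := by
      rw [Real.fourier_real_eq_integral_exp_smul]
      refine integral_congr_ae (Filter.Eventually.of_forall fun x => ?_)
      simp only [smul_eq_mul, hFdef]
      have : Complex.exp (-(Real.pi : ℂ) * (x : ℂ) ^ 2 - 2 * (Real.pi : ℂ) * Complex.I * b * x)
          = Complex.exp ((↑(-2 * Real.pi * x * b) : ℂ) * Complex.I)
            * Complex.exp (-(Real.pi : ℂ) * (x:ℂ) ^ 2) := by
        rw [← Complex.exp_add]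
        congr 1
        push_cast
        ring
      rw [this]
      ring
    have hGR : 𝓕 F = fun w : ℝ =>
        A * ((hermiteH n (s * (c + w)) * Real.exp (-Real.pi * w ^ 2) : ℝ) : ℂ) := by
      funext w
      rw [hFour1 w, IH w]
      push_cast
      ring
    rw [hGR] at hkey
    have hexp : HasDerivAt (fun w : ℝ => Real.exp (-Real.pi * w ^ 2))
        (Real.exp (-Real.pi * b ^ 2) * (-Real.pi * (2 * b))) b := by
      have h0 : HasDerivAt (fun w : ℝ => -Real.pi * w ^ 2) (-Real.pi * (2 * b)) b := by
        simpa using (hasDerivAt_pow 2 b).const_mul (-Real.pi)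
      exact h0.exp
    have hR : HasDerivAt (fun w : ℝ => hermiteH n (s * (c + w)) * Real.exp (-Real.pi * w ^ 2))
        ((2 * Real.pi * (c + b) * hermiteH n (s * (c + b))
            - s * hermiteH (n + 1) (s * (c + b))) * Real.exp (-Real.pi * b ^ 2)
          + hermiteH n (s * (c + b)) * (Real.exp (-Real.pi * b ^ 2) * (-Real.pi * (2 * b)))) b :=
      (hasDerivAt_hermite_comp n c b).mul hexp
    have hRC : HasDerivAt (fun w : ℝ =>
        A * ((hermiteH n (s * (c + w)) * Real.exp (-Real.pi * w ^ 2) : ℝ) : ℂ))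
        (A * (((2 * Real.pi * (c + b) * hermiteH n (s * (c + b))
            - s * hermiteH (n + 1) (s * (c + b))) * Real.exp (-Real.pi * b ^ 2)
          + hermiteH n (s * (c + b)) * (Real.exp (-Real.pi * b ^ 2) * (-Real.pi * (2 * b))) : ℝ)
            : ℂ)) b := (hR.ofReal_comp).const_mul A
    have hval := hkey.unique hRC
    have hI0 : Integrable (fun u : ℝ => ((c : ℂ) + Complex.I * u) ^ n *
        Complex.exp (-(Real.pi : ℂ) * (u : ℂ) ^ 2 - 2 * (Real.pi : ℂ) * Complex.I * b * u)) := by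
      have h := integrable_main c b n 0
      refine h.congr (Filter.Eventually.of_forall fun u => by push_cast; ring)
    have hI1 : Integrable (fun u : ℝ => (-2 * (Real.pi:ℂ) * Complex.I * u) *
        (((c : ℂ) + Complex.I * u) ^ n *
        Complex.exp (-(Real.pi : ℂ) * (u : ℂ) ^ 2 - 2 * (Real.pi : ℂ) * Complex.I * b * u))) := by
      have h := (integrable_main c b n 1).const_mul (-2 * (Real.pi:ℂ) * Complex.I)
      refine h.congr (Filter.Eventually.of_forall fun u => by push_cast; ring)
    have hsplit : ∀ u : ℝ, ((c : ℂ) + Complex.I * u) ^ (n + 1) *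
        Complex.exp (-(Real.pi : ℂ) * (u : ℂ) ^ 2 - 2 * (Real.pi : ℂ) * Complex.I * b * u)
        = (c : ℂ) * (((c : ℂ) + Complex.I * u) ^ n *
            Complex.exp (-(Real.pi : ℂ) * (u : ℂ) ^ 2 - 2 * (Real.pi : ℂ) * Complex.I * b * u))
          + (-(1 / (2 * (Real.pi : ℂ)))) * ((-2 * (Real.pi:ℂ) * Complex.I * u) *
            (((c : ℂ) + Complex.I * u) ^ n *
            Complex.exp (-(Real.pi : ℂ) * (u : ℂ) ^ 2 - 2 * (Real.pi : ℂ) * Complex.I * b * u))) := by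
      intro u
      rw [pow_succ]
      field_simp
    calc ∫ u : ℝ, ((c : ℂ) + Complex.I * u) ^ (n + 1) *
          Complex.exp (-(Real.pi : ℂ) * (u : ℂ) ^ 2 - 2 * (Real.pi : ℂ) * Complex.I * b * u)
        = ∫ u : ℝ, ((c : ℂ) * (((c : ℂ) + Complex.I * u) ^ n *
            Complex.exp (-(Real.pi : ℂ) * (u : ℂ) ^ 2 - 2 * (Real.pi : ℂ) * Complex.I * b * u))
          + (-(1 / (2 * (Real.pi : ℂ)))) * ((-2 * (Real.pi:ℂ) * Complex.I * u) *
            (((c : ℂ) + Complex.I * u) ^ n *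
            Complex.exp (-(Real.pi : ℂ) * (u : ℂ) ^ 2 - 2 * (Real.pi : ℂ) * Complex.I * b * u)))) :=
          integral_congr_ae (Filter.Eventually.of_forall fun u => hsplit u)
      _ = (c : ℂ) * (∫ u : ℝ, ((c : ℂ) + Complex.I * u) ^ n *
            Complex.exp (-(Real.pi : ℂ) * (u : ℂ) ^ 2 - 2 * (Real.pi : ℂ) * Complex.I * b * u))
          + (-(1 / (2 * (Real.pi : ℂ)))) * (∫ u : ℝ, (-2 * (Real.pi:ℂ) * Complex.I * u) *
            (((c : ℂ) + Complex.I * u) ^ n *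
            Complex.exp (-(Real.pi : ℂ) * (u : ℂ) ^ 2 - 2 * (Real.pi : ℂ) * Complex.I * b * u))) := by
          rw [integral_add (hI0.const_mul _) (hI1.const_mul _), integral_const_mul, integral_const_mul]
      _ = ((4 * Real.pi : ℝ) : ℂ) ^ (-((n + 1 : ℕ) : ℂ) / 2) *
          hermiteH (n + 1) (s * (c + b)) * Real.exp (-Real.pi * b ^ 2) := by
          rw [IH b, ← hFour2, hval]
          have h4π : ((4 * Real.pi : ℝ) : ℂ) ≠ 0 :=
            Complex.ofReal_ne_zero.mpr (by positivity)
          have hA' : ((4 * Real.pi : ℝ) : ℂ) ^ (-((n + 1 : ℕ) : ℂ) / 2)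
              = A * ((1 / (2 * s) : ℝ) : ℂ) := by
            have he : (-(((n : ℕ) + 1 : ℕ) : ℂ) / 2) = (-(n : ℂ) / 2) + (-1 / 2 : ℂ) := by
              push_cast; ring
            rw [he, Complex.cpow_add _ _ h4π, hA]
            congr 1
            have hcast : ((4 * Real.pi : ℝ) : ℂ) ^ (-1 / 2 : ℂ)
                = (((4 * Real.pi : ℝ) ^ (-1 / 2 : ℝ) : ℝ) : ℂ) := by
              rw [Complex.ofReal_cpow (by positivity)]
              norm_num
            rw [hcast]
            congr 1
            have h2s : Real.sqrt (4 * Real.pi) = 2 * s := by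
              rw [show (4 : ℝ) * Real.pi = (2 * s) ^ 2 by
                rw [mul_pow, Real.sq_sqrt Real.pi_pos.le]; ring,
                Real.sqrt_sq (by positivity)]
            rw [show (-1 / 2 : ℝ) = -(1 / 2) by norm_num, Real.rpow_neg (by positivity),
              ← Real.sqrt_eq_rpow, h2s]
            rw [one_div]
          rw [hA']
          have hreal : c * (hermiteH n (s * (c + b)) * Real.exp (-Real.pi * b ^ 2))
              + (-(1 / (2 * Real.pi))) * ((2 * Real.pi * (c + b) * hermiteH n (s * (c + b))
                - s * hermiteH (n + 1) (s * (c + b))) * Real.exp (-Real.pi * b ^ 2)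
              + hermiteH n (s * (c + b)) * (Real.exp (-Real.pi * b ^ 2) * (-Real.pi * (2 * b))))
              = (1 / (2 * s)) * (hermiteH (n + 1) (s * (c + b)) * Real.exp (-Real.pi * b ^ 2)) := by
            have hπ0 : Real.pi ≠ 0 := Real.pi_ne_zero
            have hs0' : s ≠ 0 := ne_of_gt hs0
            rw [← hss]
            field_simp
            ring
          have hrealC := congrArg (fun r : ℝ => (r : ℂ)) hreal
          push_cast at hrealC
          push_cast
          linear_combination A * hrealC
end

section
/- For a nonnegative integer $m$ and a real number $t > 0$, one has $\int_{\mathbb{R}^2} (u_2 + \sqrt{-1}\, u_1)^m e^{-\pi(u_1^2 + u_2^2) - 2\pi\sqrt{-1}\, t u_2}\, du_1\, du_2 = (\sqrt{-1})^{-m} t^m e^{-\pi t^2}$. -/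
open MeasureTheory Complex Real Filter

noncomputable section
namespace Stmt5

/-- The Gaussian factor. -/
def E (t x y : ℝ) : ℂ :=
  Complex.exp (-(Real.pi : ℂ) * ((x : ℂ) ^ 2 + (y : ℂ) ^ 2) -
    2 * (Real.pi : ℂ) * Complex.I * t * y)

/-- The full integrand. -/
def f (t : ℝ) (m : ℕ) (x y : ℝ) : ℂ := ((y : ℂ) + Complex.I * x) ^ m * E t x y

lemma int_abs_pow (j : ℕ) : Integrable (fun x : ℝ => |x| ^ j * rexp (-π * x ^ 2)) := by
  have h := (integrable_rpow_mul_exp_neg_mul_sq (b := π) pi_pos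
    (s := (j : ℝ)) (by exact lt_of_lt_of_le (by norm_num) (Nat.cast_nonneg j))).abs
  refine h.congr ?_
  filter_upwards with x
  rw [Real.rpow_natCast, abs_mul, _root_.abs_pow,
    _root_.abs_of_nonneg (Real.exp_nonneg _)]

lemma one_add_sq_pow_le (k : ℕ) (x : ℝ) : (1 + x ^ 2) ^ k ≤ 2 ^ k * (1 + |x| ^ (2 * k)) := by
  have hx : |x| ^ (2 * k) = (x ^ 2) ^ k := by
    rw [pow_mul, _root_.sq_abs]
  rcases le_total (x ^ 2) 1 with h | h
  · calc (1 + x ^ 2) ^ k ≤ 2 ^ k := pow_le_pow_left₀ (by positivity) (by linarith) k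
    _ ≤ 2 ^ k * (1 + |x| ^ (2 * k)) := by
        nlinarith [pow_nonneg (abs_nonneg x) (2 * k), pow_pos (by norm_num : (0:ℝ) < 2) k]
  · calc (1 + x ^ 2) ^ k ≤ (2 * x ^ 2) ^ k := pow_le_pow_left₀ (by positivity) (by linarith) k
    _ = 2 ^ k * (x ^ 2) ^ k := by rw [mul_pow]
    _ ≤ 2 ^ k * (1 + |x| ^ (2 * k)) := by
        rw [hx]; nlinarith [pow_pos (by norm_num : (0:ℝ) < 2) k, pow_nonneg (sq_nonneg x) k]

lemma G_integrable (k j : ℕ) :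
    Integrable (fun x : ℝ => (1 + x ^ 2) ^ k * |x| ^ j * rexp (-π * x ^ 2)) := by
  have hmaj := ((int_abs_pow j).add (int_abs_pow (2 * k + j))).const_mul ((2:ℝ) ^ k)
  apply Integrable.mono' hmaj
  · exact (Continuous.mul (by continuity) (by continuity)).aestronglyMeasurable
  · filter_upwards with x
    have h0 : (0:ℝ) ≤ (1 + x ^ 2) ^ k * |x| ^ j * rexp (-π * x ^ 2) := by positivity
    rw [Real.norm_eq_abs, _root_.abs_of_nonneg h0]
    have h1 := one_add_sq_pow_le k x
    calc (1 + x ^ 2) ^ k * |x| ^ j * rexp (-π * x ^ 2)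
        ≤ (2 ^ k * (1 + |x| ^ (2 * k))) * |x| ^ j * rexp (-π * x ^ 2) := by
          gcongr
      _ = 2 ^ k * ((fun x : ℝ => |x| ^ j * rexp (-π * x ^ 2)) x
            + (fun x : ℝ => |x| ^ (2 * k + j) * rexp (-π * x ^ 2)) x) := by
          simp only []; rw [pow_add]; ring
      _ = 2 ^ k * ((fun x : ℝ => |x| ^ j * rexp (-π * x ^ 2))
            + fun x : ℝ => |x| ^ (2 * k + j) * rexp (-π * x ^ 2)) x := rfl


lemma norm_E (t x y : ℝ) : ‖E t x y‖ = rexp (-π * x ^ 2) * rexp (-π * y ^ 2) := by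
  rw [E, Complex.norm_exp, ← Real.exp_add]
  congr 1
  simp [← Complex.ofReal_pow, Complex.sub_re, Complex.mul_re, Complex.add_re,
    Complex.I_re, Complex.I_im, Complex.ofReal_re, Complex.ofReal_im]
  ring

lemma norm_base_le (x y : ℝ) : ‖(y : ℂ) + Complex.I * x‖ ≤ (1 + x ^ 2) * (1 + y ^ 2) := by
  calc ‖(y : ℂ) + Complex.I * x‖ ≤ ‖(y : ℂ)‖ + ‖Complex.I * (x : ℂ)‖ := norm_add_le _ _
    _ = |y| + |x| := by simp
    _ ≤ (1 + x ^ 2) * (1 + y ^ 2) := by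
        nlinarith [sq_nonneg (|x| - 1), sq_nonneg (|y| - 1), _root_.sq_abs x, _root_.sq_abs y,
          abs_nonneg x, abs_nonneg y, sq_nonneg x, sq_nonneg y]

lemma norm_f_le (t : ℝ) (k j l : ℕ) (x y : ℝ) :
    ‖((y : ℂ) + Complex.I * x) ^ k * (x : ℂ) ^ j * (y : ℂ) ^ l * E t x y‖ ≤
      ((1 + x ^ 2) ^ k * |x| ^ j * rexp (-π * x ^ 2)) *
        ((1 + y ^ 2) ^ k * |y| ^ l * rexp (-π * y ^ 2)) := by
  rw [norm_mul, norm_mul, norm_mul, norm_E, norm_pow, norm_pow, norm_pow,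
    Complex.norm_real, Complex.norm_real, Real.norm_eq_abs, Real.norm_eq_abs]
  calc ‖(y : ℂ) + Complex.I * x‖ ^ k * |x| ^ j * |y| ^ l * (rexp (-π * x ^ 2) * rexp (-π * y ^ 2))
      ≤ ((1 + x ^ 2) * (1 + y ^ 2)) ^ k * |x| ^ j * |y| ^ l *
        (rexp (-π * x ^ 2) * rexp (-π * y ^ 2)) := by
        gcongr <;> first
          | exact norm_nonneg _
          | exact norm_base_le x y
    _ = ((1 + x ^ 2) ^ k * |x| ^ j * rexp (-π * x ^ 2)) *
        ((1 + y ^ 2) ^ k * |y| ^ l * rexp (-π * y ^ 2)) := by rw [mul_pow]; ring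

lemma cont_f (t : ℝ) (k j l : ℕ) :
    Continuous (fun v : ℝ × ℝ =>
      ((v.2 : ℂ) + Complex.I * v.1) ^ k * (v.1 : ℂ) ^ j * (v.2 : ℂ) ^ l * E t v.1 v.2) := by
  unfold E
  fun_prop

lemma int2 (t : ℝ) (k j l : ℕ) :
    Integrable (fun v : ℝ × ℝ =>
      ((v.2 : ℂ) + Complex.I * v.1) ^ k * (v.1 : ℂ) ^ j * (v.2 : ℂ) ^ l * E t v.1 v.2)
      ((volume : Measure ℝ).prod volume) := by
  apply Integrable.mono' ((G_integrable k j).mul_prod (G_integrable k l))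
  · exact (cont_f t k j l).aestronglyMeasurable
  · filter_upwards with v
    exact norm_f_le t k j l v.1 v.2

lemma int_slice_y (t x : ℝ) (k l : ℕ) :
    Integrable (fun y : ℝ => ((y : ℂ) + Complex.I * x) ^ k * (y : ℂ) ^ l * E t x y) := by
  apply Integrable.mono'
    ((G_integrable k l).const_mul ((1 + x ^ 2) ^ k * rexp (-π * x ^ 2)))
  · apply Continuous.aestronglyMeasurable
    unfold E
    fun_prop
  · filter_upwards with y
    have h := norm_f_le t k 0 l x y
    simp only [pow_zero, mul_one, one_mul] at h
    exact h

lemma int_slice_x (t y : ℝ) (k j : ℕ) :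
    Integrable (fun x : ℝ => ((y : ℂ) + Complex.I * x) ^ k * (x : ℂ) ^ j * E t x y) := by
  apply Integrable.mono'
    ((G_integrable k j).const_mul ((1 + y ^ 2) ^ k * rexp (-π * y ^ 2)))
  · apply Continuous.aestronglyMeasurable
    unfold E
    fun_prop
  · filter_upwards with x
    have h := norm_f_le t k j 0 x y
    simp only [pow_zero, mul_one, one_mul] at h
    calc ‖((y : ℂ) + Complex.I * x) ^ k * (x : ℂ) ^ j * E t x y‖
        ≤ ((1 + x ^ 2) ^ k * |x| ^ j * rexp (-π * x ^ 2)) *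
          ((1 + y ^ 2) ^ k * rexp (-π * y ^ 2)) := h
      _ = ((1 + y ^ 2) ^ k * rexp (-π * y ^ 2)) *
          ((1 + x ^ 2) ^ k * |x| ^ j * rexp (-π * x ^ 2)) := by ring


/-- y-partial derivative of `f`. -/
def Dy (t : ℝ) (m : ℕ) (x y : ℝ) : ℂ :=
  (m : ℂ) * ((y : ℂ) + Complex.I * x) ^ (m - 1) * E t x y +
    ((y : ℂ) + Complex.I * x) ^ m * ((-2 * (π : ℂ) * y - 2 * (π : ℂ) * Complex.I * t) * E t x y)

/-- x-partial derivative of `f`. -/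
def Dx (t : ℝ) (m : ℕ) (x y : ℝ) : ℂ :=
  (m : ℂ) * ((y : ℂ) + Complex.I * x) ^ (m - 1) * Complex.I * E t x y +
    ((y : ℂ) + Complex.I * x) ^ m * ((-2 * (π : ℂ) * x) * E t x y)

lemma hasDerivAt_f_y (t : ℝ) (m : ℕ) (x y : ℝ) :
    HasDerivAt (fun y : ℝ => f t m x y) (Dy t m x y) y := by
  have h1 : HasDerivAt (fun z : ℂ => (z + Complex.I * x) ^ m)
      ((m : ℂ) * ((y : ℂ) + Complex.I * x) ^ (m - 1)) (y : ℂ) := by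
    simpa using ((hasDerivAt_id ((y : ℝ) : ℂ)).add_const (Complex.I * (x : ℂ))).fun_pow m
  have ha : HasDerivAt (fun z : ℂ => -(π : ℂ) * ((x : ℂ) ^ 2 + z ^ 2))
      (-(π : ℂ) * (2 * (y : ℂ))) (y : ℂ) := by
    simpa using ((hasDerivAt_pow 2 ((y : ℝ) : ℂ)).const_add ((x : ℂ) ^ 2)).const_mul (-(π : ℂ))
  have hb : HasDerivAt (fun z : ℂ => 2 * (π : ℂ) * Complex.I * t * z)
      (2 * (π : ℂ) * Complex.I * t) (y : ℂ) := by
    simpa using (hasDerivAt_id ((y : ℝ) : ℂ)).const_mul (2 * (π : ℂ) * Complex.I * (t : ℂ))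
  have h2 : HasDerivAt
      (fun z : ℂ => Complex.exp (-(π : ℂ) * ((x : ℂ) ^ 2 + z ^ 2) - 2 * (π : ℂ) * Complex.I * t * z))
      ((-2 * (π : ℂ) * y - 2 * (π : ℂ) * Complex.I * t) * E t x y) (y : ℂ) := by
    have h := (ha.fun_sub hb).cexp
    rw [show Complex.exp (-(π : ℂ) * ((x : ℂ) ^ 2 + ((y : ℝ) : ℂ) ^ 2) -
        2 * (π : ℂ) * Complex.I * t * ((y : ℝ) : ℂ)) = E t x y from rfl] at h
    refine h.congr_deriv ?_
    ring
  exact (h1.mul h2).comp_ofReal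

lemma hasDerivAt_f_x (t : ℝ) (m : ℕ) (x y : ℝ) :
    HasDerivAt (fun x : ℝ => f t m x y) (Dx t m x y) x := by
  have h1 : HasDerivAt (fun z : ℂ => ((y : ℂ) + Complex.I * z) ^ m)
      ((m : ℂ) * ((y : ℂ) + Complex.I * x) ^ (m - 1) * Complex.I) (x : ℂ) := by
    simpa [mul_comm, mul_assoc] using
      (((hasDerivAt_id ((x : ℝ) : ℂ)).const_mul Complex.I).const_add ((y : ℂ))).fun_pow m
  have ha : HasDerivAt (fun z : ℂ => -(π : ℂ) * (z ^ 2 + (y : ℂ) ^ 2))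
      (-(π : ℂ) * (2 * (x : ℂ))) (x : ℂ) := by
    simpa using ((hasDerivAt_pow 2 ((x : ℝ) : ℂ)).add_const ((y : ℂ) ^ 2)).const_mul (-(π : ℂ))
  have h2 : HasDerivAt
      (fun z : ℂ => Complex.exp (-(π : ℂ) * (z ^ 2 + (y : ℂ) ^ 2) - 2 * (π : ℂ) * Complex.I * t * y))
      ((-2 * (π : ℂ) * x) * E t x y) (x : ℂ) := by
    have h := (ha.sub_const (2 * (π : ℂ) * Complex.I * t * y)).cexp
    rw [show Complex.exp (-(π : ℂ) * (((x : ℝ) : ℂ) ^ 2 + (y : ℂ) ^ 2) -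
        2 * (π : ℂ) * Complex.I * t * (y : ℂ)) = E t x y from rfl] at h
    refine h.congr_deriv ?_
    ring
  exact (h1.mul h2).comp_ofReal


lemma int_slice_f_y (t x : ℝ) (m : ℕ) : Integrable (fun y : ℝ => f t m x y) := by
  refine (int_slice_y t x m 0).congr ?_
  filter_upwards with y
  simp [f]

lemma int_slice_f_x (t y : ℝ) (m : ℕ) : Integrable (fun x : ℝ => f t m x y) := by
  refine (int_slice_x t y m 0).congr ?_
  filter_upwards with x
  simp [f]

lemma int_slice_Dy (t x : ℝ) (m : ℕ) : Integrable (fun y : ℝ => Dy t m x y) := by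
  have hA := (int_slice_y t x (m - 1) 0).const_mul ((m : ℂ))
  have hB := (int_slice_y t x m 1).const_mul (-2 * (π : ℂ))
  have hC := (int_slice_y t x m 0).const_mul (-2 * (π : ℂ) * Complex.I * t)
  refine ((hA.add hB).add hC).congr ?_
  filter_upwards with y
  simp only [Dy, Pi.add_apply, pow_zero, pow_one, mul_one]
  ring

lemma int_slice_Dx_y (t x : ℝ) (m : ℕ) : Integrable (fun y : ℝ => Dx t m x y) := by
  have hA := (int_slice_y t x (m - 1) 0).const_mul ((m : ℂ) * Complex.I)
  have hB := (int_slice_y t x m 0).const_mul (-2 * (π : ℂ) * x)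
  refine (hA.add hB).congr ?_
  filter_upwards with y
  simp only [Dx, Pi.add_apply, pow_zero, pow_one, mul_one]
  ring

lemma int_slice_Dx_x (t y : ℝ) (m : ℕ) : Integrable (fun x : ℝ => Dx t m x y) := by
  have hA := (int_slice_x t y (m - 1) 0).const_mul ((m : ℂ) * Complex.I)
  have hB := (int_slice_x t y m 1).const_mul (-2 * (π : ℂ))
  refine (hA.add hB).congr ?_
  filter_upwards with x
  simp only [Dx, Pi.add_apply, pow_zero, pow_one, mul_one]
  ring

lemma intDy_zero (t x : ℝ) (m : ℕ) : ∫ y : ℝ, Dy t m x y = 0 :=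
  integral_eq_zero_of_hasDerivAt_of_integrable (fun y => hasDerivAt_f_y t m x y)
    (int_slice_Dy t x m) (int_slice_f_y t x m)

lemma intDx_zero (t y : ℝ) (m : ℕ) : ∫ x : ℝ, Dx t m x y = 0 :=
  integral_eq_zero_of_hasDerivAt_of_integrable (fun x => hasDerivAt_f_x t m x y)
    (int_slice_Dx_x t y m) (int_slice_f_x t y m)

lemma int2_f (t : ℝ) (m : ℕ) :
    Integrable (fun v : ℝ × ℝ => f t m v.1 v.2) ((volume : Measure ℝ).prod volume) := by
  refine (int2 t m 0 0).congr ?_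
  filter_upwards with v
  simp [f]

lemma int2_Dx (t : ℝ) (m : ℕ) :
    Integrable (fun v : ℝ × ℝ => Dx t m v.1 v.2) ((volume : Measure ℝ).prod volume) := by
  have hA := (int2 t (m - 1) 0 0).const_mul ((m : ℂ) * Complex.I)
  have hB := (int2 t m 1 0).const_mul (-2 * (π : ℂ))
  refine (hA.add hB).congr ?_
  filter_upwards with v
  simp only [Dx, Pi.add_apply, pow_zero, pow_one, mul_one]
  ring

lemma key (t : ℝ) (m : ℕ) :
    (∫ x : ℝ, ∫ y : ℝ, f t (m + 1) x y) =
      -(Complex.I * t) * ∫ x : ℝ, ∫ y : ℝ, f t m x y := by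
  have hπ : (π : ℂ) ≠ 0 := Complex.ofReal_ne_zero.2 pi_ne_zero
  -- `∫ x, ∫ y, Dx = 0` via Fubini
  have hswap : (∫ x : ℝ, ∫ y : ℝ, Dx t m x y) = ∫ y : ℝ, ∫ x : ℝ, Dx t m x y :=
    integral_integral_swap (int2_Dx t m)
  have hDx0 : (∫ x : ℝ, ∫ y : ℝ, Dx t m x y) = 0 := by
    rw [hswap]
    rw [show (fun y : ℝ => ∫ x : ℝ, Dx t m x y) = fun _ => (0 : ℂ) from
      funext fun y => intDx_zero t y m, integral_zero]
  -- pointwise combination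
  have hcombo : ∀ x y : ℝ, Dy t m x y + Complex.I * Dx t m x y
      = (-2 * (π : ℂ)) * f t (m + 1) x y + (-(2 * (π : ℂ) * Complex.I * t)) * f t m x y := by
    intro x y
    simp only [Dy, Dx, f, pow_succ]
    linear_combination ((m : ℂ) * ((y : ℂ) + Complex.I * x) ^ (m - 1) * E t x y) * Complex.I_mul_I
  -- the integral of the combination is zero
  have hzero : (∫ x : ℝ, ∫ y : ℝ, (Dy t m x y + Complex.I * Dx t m x y)) = 0 := by
    have hinner : ∀ x : ℝ, (∫ y : ℝ, (Dy t m x y + Complex.I * Dx t m x y))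
        = Complex.I * ∫ y : ℝ, Dx t m x y := by
      intro x
      rw [integral_add (int_slice_Dy t x m) ((int_slice_Dx_y t x m).const_mul Complex.I),
        intDy_zero t x m, integral_const_mul, zero_add]
    rw [show (fun x : ℝ => ∫ y : ℝ, (Dy t m x y + Complex.I * Dx t m x y))
        = fun x : ℝ => Complex.I * ∫ y : ℝ, Dx t m x y from funext hinner,
      integral_const_mul, hDx0, mul_zero]
  -- the integral of the combination as linear combination of the two moments
  have hA1 : Integrable (fun x : ℝ => ∫ y : ℝ, f t (m + 1) x y) := by
    have := (int2_f t (m + 1)).integral_prod_left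
    simpa using this
  have hA0 : Integrable (fun x : ℝ => ∫ y : ℝ, f t m x y) := by
    have := (int2_f t m).integral_prod_left
    simpa using this
  have hval : (∫ x : ℝ, ∫ y : ℝ, (Dy t m x y + Complex.I * Dx t m x y))
      = (-2 * (π : ℂ)) * (∫ x : ℝ, ∫ y : ℝ, f t (m + 1) x y)
        + (-(2 * (π : ℂ) * Complex.I * t)) * ∫ x : ℝ, ∫ y : ℝ, f t m x y := by
    have h1 : ∀ x : ℝ, (∫ y : ℝ, (Dy t m x y + Complex.I * Dx t m x y))
        = (-2 * (π : ℂ)) * (∫ y : ℝ, f t (m + 1) x y)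
          + (-(2 * (π : ℂ) * Complex.I * t)) * ∫ y : ℝ, f t m x y := by
      intro x
      rw [show (fun y : ℝ => Dy t m x y + Complex.I * Dx t m x y)
          = fun y : ℝ => (-2 * (π : ℂ)) * f t (m + 1) x y
            + (-(2 * (π : ℂ) * Complex.I * t)) * f t m x y from funext fun y => hcombo x y,
        integral_add ((int_slice_f_y t x (m + 1)).const_mul _)
          ((int_slice_f_y t x m).const_mul _),
        integral_const_mul, integral_const_mul]
    rw [show (fun x : ℝ => ∫ y : ℝ, (Dy t m x y + Complex.I * Dx t m x y))
        = fun x : ℝ => (-2 * (π : ℂ)) * (∫ y : ℝ, f t (m + 1) x y)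
          + (-(2 * (π : ℂ) * Complex.I * t)) * ∫ y : ℝ, f t m x y from funext h1,
      integral_add (hA1.const_mul _) (hA0.const_mul _), integral_const_mul, integral_const_mul]
  have hfin : (-2 * (π : ℂ)) * (∫ x : ℝ, ∫ y : ℝ, f t (m + 1) x y)
      + (-(2 * (π : ℂ) * Complex.I * t)) * ∫ x : ℝ, ∫ y : ℝ, f t m x y = 0 := by
    rw [← hval, hzero]
  have h2π : (-2 * (π : ℂ)) ≠ 0 := by
    simp [hπ]
  refine mul_left_cancel₀ h2π ?_
  linear_combination hfin


lemma base (t : ℝ) : (∫ x : ℝ, ∫ y : ℝ, f t 0 x y) = Complex.exp (-(π : ℂ) * t ^ 2) := by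
  have hπ : (π : ℂ) ≠ 0 := Complex.ofReal_ne_zero.2 pi_ne_zero
  have hsplit : ∀ x y : ℝ, f t 0 x y = Complex.exp (-(π : ℂ) * (x : ℂ) ^ 2) *
      Complex.exp ((-(π : ℂ)) * (y : ℂ) ^ 2 + (-(2 * (π : ℂ) * Complex.I * t)) * (y : ℂ) + 0) := by
    intro x y
    rw [f, E, pow_zero, one_mul, ← Complex.exp_add]
    congr 1
    ring
  have hinner : ∀ x : ℝ, (∫ y : ℝ, f t 0 x y)
      = Complex.exp (-(π : ℂ) * (x : ℂ) ^ 2) * Complex.exp (-(π : ℂ) * t ^ 2) := by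
    intro x
    rw [show (fun y : ℝ => f t 0 x y) = fun y : ℝ => Complex.exp (-(π : ℂ) * (x : ℂ) ^ 2) *
        Complex.exp ((-(π : ℂ)) * (y : ℂ) ^ 2 + (-(2 * (π : ℂ) * Complex.I * t)) * (y : ℂ) + 0)
      from funext (hsplit x), integral_const_mul]
    congr 1
    rw [integral_cexp_quadratic (by simpa using pi_pos) _ _]
    rw [show ((π : ℂ) / -(-(π : ℂ))) = 1 by field_simp, one_cpow, one_mul]
    congr 1
    field_simp
    linear_combination (4 * (π : ℂ) * t ^ 2) * Complex.I_mul_I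
  rw [funext hinner, integral_mul_const]
  rw [show (fun x : ℝ => Complex.exp (-(π : ℂ) * (x : ℂ) ^ 2))
      = fun x : ℝ => Complex.exp (-(π : ℂ) * (x : ℂ) ^ 2) from rfl]
  rw [integral_gaussian_complex (by simpa using pi_pos)]
  rw [show ((π : ℂ) / (π : ℂ)) = 1 by field_simp, one_cpow, one_mul]

lemma moments (t : ℝ) (m : ℕ) : (∫ x : ℝ, ∫ y : ℝ, f t m x y)
    = (-(Complex.I * t)) ^ m * Complex.exp (-(π : ℂ) * t ^ 2) := by
  induction m with
  | zero => simpa using base t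
  | succ n ih => rw [key t n, ih, pow_succ]; ring

end Stmt5

theorem stmt_5 (m : ℕ) (t : ℝ) (ht : 0 < t) :
    ∫ u₁ : ℝ, ∫ u₂ : ℝ, ((u₂ : ℂ) + Complex.I * u₁) ^ m *
        Complex.exp (-(Real.pi : ℂ) * ((u₁ : ℂ) ^ 2 + (u₂ : ℂ) ^ 2) -
          2 * (Real.pi : ℂ) * Complex.I * t * u₂)
      = Complex.I ^ (-(m : ℤ)) * (t : ℂ) ^ m * Real.exp (-Real.pi * t ^ 2) := by
  have h : (∫ u₁ : ℝ, ∫ u₂ : ℝ, ((u₂ : ℂ) + Complex.I * u₁) ^ m *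
        Complex.exp (-(Real.pi : ℂ) * ((u₁ : ℂ) ^ 2 + (u₂ : ℂ) ^ 2) -
          2 * (Real.pi : ℂ) * Complex.I * t * u₂))
      = ∫ x : ℝ, ∫ y : ℝ, Stmt5.f t m x y := rfl
  rw [h, Stmt5.moments t m, zpow_neg, zpow_natCast, ← inv_pow, Complex.inv_I,
    Complex.ofReal_exp]
  rw [show ((-Real.pi * t ^ 2 : ℝ) : ℂ) = -(π : ℂ) * t ^ 2 by push_cast; ring]
  rw [show -(Complex.I * (t : ℂ)) = (-Complex.I) * (t : ℂ) by ring, mul_pow]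
end
end

section
/- Let $t_1, t_2, a_2 > 0$ be real and $n$ a nonnegative integer. Then $\int_{\mathbb{R}} (t_2^{-1}a_2 + \sqrt{-1}\, t_1^{-1}t_2^{-1}a_2 u)^n\, e^{-\pi t_1^{-2}t_2^{-2}a_2^2 u^2 - 2\pi\sqrt{-1}\,u}\, du = (4\pi)^{-n/2}\, t_1 t_2 a_2^{-1}\, H_n\!\left(\pi^{1/2}(t_2^{-1}a_2 + t_1 t_2 a_2^{-1})\right) e^{-\pi t_1^2 t_2^2 a_2^{-2}}$, where $H_n$ is the $n$-th Hermite polynomial. -/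
open MeasureTheory
open scoped ContDiff

lemma gauss_contDiff : ContDiff ℝ ∞ (fun y : ℝ => Real.exp (-(y ^ 2))) :=
  (((contDiff_id (E := ℝ)).pow 2).neg).exp

lemma deriv_gauss : deriv (fun y : ℝ => Real.exp (-(y ^ 2))) = fun y => -2 * (y * Real.exp (-(y ^ 2))) := by
  funext y
  have h : HasDerivAt (fun y : ℝ => Real.exp (-(y ^ 2))) (Real.exp (-(y ^ 2)) * (-(2 * y))) y := by
    have h1 : HasDerivAt (fun y : ℝ => -(y ^ 2)) (-(2 * y)) y := by
      simpa using ((hasDerivAt_pow 2 y)).fun_neg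
    exact h1.exp
  rw [h.deriv]; ring

lemma itd_mul (n : ℕ) (g : ℝ → ℝ) (hg : ContDiff ℝ ∞ g) (x : ℝ) :
    iteratedDeriv n (fun y => y * g y) x
      = x * iteratedDeriv n g x + n * iteratedDeriv (n - 1) g x := by
  induction n generalizing g with
  | zero => simp
  | succ n ih =>
    have hg' : ContDiff ℝ ∞ (deriv g) := (contDiff_infty_iff_deriv.mp hg).2
    have hd : deriv (fun y => y * g y) = fun y => g y + y * deriv g y := by
      funext y
      have h0 : HasDerivAt (fun y : ℝ => y * g y) (1 * g y + y * deriv g y) y :=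
        (hasDerivAt_id y).mul ((hg.differentiable (by simp) y).hasDerivAt)
      rw [h0.deriv]; ring
    rw [iteratedDeriv_succ', hd]
    have hadd : iteratedDeriv n (fun y => g y + y * deriv g y) x
        = iteratedDeriv n g x + iteratedDeriv n (fun y => y * deriv g y) x := by
      rw [← iteratedDerivWithin_univ, ← iteratedDerivWithin_univ, ← iteratedDerivWithin_univ]
      exact iteratedDerivWithin_add (Set.mem_univ x) uniqueDiffOn_univ
        (hg.of_le (by exact_mod_cast le_top)).contDiffWithinAt
        (((contDiff_id.mul hg') : ContDiff ℝ ∞ _).of_le (by exact_mod_cast le_top)).contDiffWithinAt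
    rw [hadd, ih (deriv g) hg']
    rw [← iteratedDeriv_succ']
    rcases n with _ | m
    · simp; ring
    · have : iteratedDeriv (m + 1 - 1) (deriv g) x = iteratedDeriv (m + 1) g x := by
        rw [Nat.add_sub_cancel, ← iteratedDeriv_succ']
      rw [this]
      push_cast
      ring

lemma hermiteH_zero (x : ℝ) : hermiteH 0 x = 1 := by
  simp [hermiteH, ← Real.exp_add]

lemma hermiteH_succ (n : ℕ) (x : ℝ) :
    hermiteH (n + 1) x = 2 * x * hermiteH n x - 2 * n * hermiteH (n - 1) x := by
  set g : ℝ → ℝ := fun y => Real.exp (-(y ^ 2)) with hgdef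
  have key : iteratedDeriv (n + 1) g x
      = -2 * (x * iteratedDeriv n g x + n * iteratedDeriv (n - 1) g x) := by
    rw [iteratedDeriv_succ', deriv_gauss]
    have : iteratedDeriv n (fun y => -2 * (y * g y)) x = -2 * iteratedDeriv n (fun y => y * g y) x := by
      rw [← iteratedDerivWithin_univ, ← iteratedDerivWithin_univ]
      exact iteratedDerivWithin_const_mul (Set.mem_univ x) uniqueDiffOn_univ _
        (((contDiff_id.mul gauss_contDiff) : ContDiff ℝ ∞ _).of_le (by exact_mod_cast le_top)).contDiffWithinAt
    rw [this, itd_mul n g gauss_contDiff x]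
  rcases n with _ | m
  · simp only [hermiteH, ← hgdef, key]
    push_cast
    ring
  · simp only [hermiteH, ← hgdef, key]
    have h1 : ((-1 : ℝ)) ^ (m + 1 + 1) = (-1) ^ (m + 1) * (-1) := by ring
    have h2 : ((-1 : ℝ)) ^ (m + 1 - 1) = (-1) ^ m := by norm_num
    rw [h1, h2]
    have h3 : (m + 1 - 1 : ℕ) = m := rfl
    rw [h3]
    push_cast
    ring

lemma habs (β : ℝ) (hβ : 0 < β) (m : ℕ) :
    Integrable (fun u : ℝ => |u| ^ m * Real.exp (-β * u ^ 2)) := by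
  have h2m : Integrable (fun u : ℝ => u ^ (2 * m) * Real.exp (-β * u ^ 2)) := by
    have hs : (-1 : ℝ) < ((2 * m : ℕ) : ℝ) :=
      lt_of_lt_of_le neg_one_lt_zero (by positivity)
    have := integrable_rpow_mul_exp_neg_mul_sq hβ (s := ((2 * m : ℕ) : ℝ)) hs
    have h' : ∀ x : ℝ, x ^ (((2 * m : ℕ)) : ℝ) = x ^ (2 * m) := fun x => Real.rpow_natCast x (2 * m)
    simpa only [h'] using this
  have hexp : Integrable (fun u : ℝ => Real.exp (-β * u ^ 2)) := integrable_exp_neg_mul_sq hβ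
  refine (hexp.add h2m).mono' ?_ ?_
  · exact ((_root_.continuous_abs.pow m).mul (by continuity)).aestronglyMeasurable
  · refine Filter.Eventually.of_forall (fun u => ?_)
    simp only [Pi.add_apply]
    have hk : (0:ℝ) ≤ u ^ (2 * m) := by rw [pow_mul]; positivity
    have h1 : |u| ^ m ≤ 1 + u ^ (2 * m) := by
      rcases le_total (|u|) 1 with h | h
      · have : |u| ^ m ≤ 1 := pow_le_one₀ (abs_nonneg u) h
        linarith
      · have h2 : |u| ^ m ≤ |u| ^ (2 * m) := pow_le_pow_right₀ h (by omega)
        have h3 : |u| ^ (2 * m) = u ^ (2 * m) := by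
          rw [← _root_.abs_pow, abs_of_nonneg hk]
        linarith
    have hge : (0:ℝ) ≤ Real.exp (-β * u ^ 2) := (Real.exp_pos _).le
    have heq : ‖|u| ^ m * Real.exp (-β * u ^ 2)‖ = |u| ^ m * Real.exp (-β * u ^ 2) := by
      rw [Real.norm_eq_abs, abs_of_nonneg (by positivity)]
    rw [heq]
    nlinarith [mul_le_mul_of_nonneg_right h1 hge]

lemma exp_norm (c : ℝ) (u : ℝ) :
    ‖Complex.exp (-(Real.pi:ℂ) * c ^ 2 * u ^ 2 - 2 * Real.pi * Complex.I * u)‖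
      = Real.exp (-(Real.pi * c ^ 2) * u ^ 2) := by
  have h : -(Real.pi:ℂ) * c ^ 2 * u ^ 2 - 2 * Real.pi * Complex.I * u
      = Complex.ofReal (-(Real.pi * c ^ 2) * u ^ 2) + Complex.ofReal (-(2 * Real.pi * u)) * Complex.I := by
    push_cast; ring
  rw [Complex.norm_exp]
  congr 1
  rw [h]
  simp only [Complex.add_re, Complex.ofReal_re, Complex.mul_I_re, Complex.ofReal_im]
  ring

lemma integ (b c : ℝ) (hc : 0 < c) (k : ℕ) :
    Integrable (fun u : ℝ => ((b:ℂ) + Complex.I * c * u) ^ k *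
      Complex.exp (-(Real.pi:ℂ) * c ^ 2 * u ^ 2 - 2 * Real.pi * Complex.I * u)) := by
  have hmaj : Integrable (fun u : ℝ => (|b| + c * |u|) ^ k * Real.exp (-(Real.pi * c ^ 2) * u ^ 2)) := by
    have hsum : ∀ u : ℝ, (|b| + c * |u|) ^ k * Real.exp (-(Real.pi * c ^ 2) * u ^ 2)
        = ∑ i ∈ Finset.range (k + 1),
            (|b| ^ i * c ^ (k - i) * (k.choose i : ℝ)) *
              (|u| ^ (k - i) * Real.exp (-(Real.pi * c ^ 2) * u ^ 2)) := by
      intro u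
      rw [add_pow, Finset.sum_mul]
      refine Finset.sum_congr rfl (fun i _ => ?_)
      rw [mul_pow]
      ring
    have hInt : Integrable (fun u : ℝ => ∑ i ∈ Finset.range (k + 1),
        (|b| ^ i * c ^ (k - i) * (k.choose i : ℝ)) *
          (|u| ^ (k - i) * Real.exp (-(Real.pi * c ^ 2) * u ^ 2))) :=
      integrable_finset_sum _ (fun i _ =>
        (habs (Real.pi * c ^ 2) (by positivity) (k - i)).const_mul _)
    exact hInt.congr (Filter.Eventually.of_forall (fun u => (hsum u).symm))
  refine hmaj.mono' ?_ ?_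
  · apply Continuous.aestronglyMeasurable
    apply Continuous.mul
    · exact (Continuous.pow (by continuity) k)
    · exact Complex.continuous_exp.comp (by continuity)
  · refine Filter.Eventually.of_forall (fun u => ?_)
    rw [norm_mul, norm_pow, exp_norm]
    have h1 : ‖(b:ℂ) + Complex.I * c * u‖ ≤ |b| + c * |u| := by
      refine (norm_add_le _ _).trans ?_
      have : ‖Complex.I * c * u‖ = c * |u| := by
        simp [abs_of_pos hc]
      rw [this, Complex.norm_real, Real.norm_eq_abs]
    exact mul_le_mul_of_nonneg_right
      (pow_le_pow_left₀ (norm_nonneg _) h1 k) (Real.exp_pos _).le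

lemma base (c : ℝ) (hc : 0 < c) :
    ∫ u : ℝ, Complex.exp (-(Real.pi:ℂ) * c ^ 2 * u ^ 2 - 2 * Real.pi * Complex.I * u)
      = ((c⁻¹ * Real.exp (-(Real.pi * c⁻¹ ^ 2)) : ℝ) : ℂ) := by
  have hπ : (Real.pi : ℂ) ≠ 0 := Complex.ofReal_ne_zero.mpr Real.pi_ne_zero
  have hcC : (c : ℂ) ≠ 0 := Complex.ofReal_ne_zero.mpr hc.ne'
  have hb : (-(Real.pi:ℂ) * c ^ 2).re < 0 := by
    have h : (-(Real.pi:ℂ) * c ^ 2) = ((-(Real.pi * c ^ 2) : ℝ) : ℂ) := by push_cast; ring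
    rw [h, Complex.ofReal_re]
    have : 0 < Real.pi * c ^ 2 := by positivity
    linarith
  have key := integral_cexp_quadratic hb (-(2 * Real.pi * Complex.I)) 0
  have hshape : ∀ u : ℝ, (-(Real.pi:ℂ) * c ^ 2) * u ^ 2 + (-(2 * Real.pi * Complex.I)) * u + 0
      = -(Real.pi:ℂ) * c ^ 2 * u ^ 2 - 2 * Real.pi * Complex.I * u := by intro u; ring
  simp_rw [hshape] at key
  rw [key]
  have h1 : (Real.pi : ℂ) / -(-(Real.pi:ℂ) * c ^ 2) = ((c⁻¹ ^ 2 : ℝ) : ℂ) := by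
    push_cast
    field_simp
  have h2 : (((c⁻¹ ^ 2 : ℝ) : ℂ)) ^ (1/2 : ℂ) = ((c⁻¹ : ℝ) : ℂ) := by
    rw [show ((1/2 : ℂ)) = (((1/2 : ℝ)) : ℂ) by push_cast; ring]
    rw [← Complex.ofReal_cpow (by positivity)]
    congr 1
    rw [← Real.sqrt_eq_rpow, Real.sqrt_sq (by positivity)]
  have h3 : (0 : ℂ) - (-(2 * Real.pi * Complex.I)) ^ 2 / (4 * (-(Real.pi:ℂ) * c ^ 2))
      = ((-(Real.pi * c⁻¹ ^ 2) : ℝ) : ℂ) := by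
    have hI : Complex.I ^ 2 = -1 := Complex.I_sq
    field_simp
    ring_nf
    rw [hI]
    ring
    push_cast
    field_simp
  rw [h1, h2, h3, ← Complex.ofReal_exp, ← Complex.ofReal_mul]

lemma recur (b c : ℝ) (hc : 0 < c) (k : ℕ) :
    (∫ u : ℝ, ((b:ℂ) + Complex.I * c * u) ^ (k + 1) *
        Complex.exp (-(Real.pi:ℂ) * c ^ 2 * u ^ 2 - 2 * Real.pi * Complex.I * u))
      = ((b:ℂ) + (c:ℂ)⁻¹) * (∫ u : ℝ, ((b:ℂ) + Complex.I * c * u) ^ k *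
          Complex.exp (-(Real.pi:ℂ) * c ^ 2 * u ^ 2 - 2 * Real.pi * Complex.I * u))
        - ((k:ℂ) / (2 * Real.pi)) * ∫ u : ℝ, ((b:ℂ) + Complex.I * c * u) ^ (k - 1) *
          Complex.exp (-(Real.pi:ℂ) * c ^ 2 * u ^ 2 - 2 * Real.pi * Complex.I * u) := by
  have hπ : (Real.pi : ℂ) ≠ 0 := Complex.ofReal_ne_zero.mpr Real.pi_ne_zero
  have hcC : (c : ℂ) ≠ 0 := Complex.ofReal_ne_zero.mpr hc.ne'
  have hIne : Complex.I ≠ 0 := Complex.I_ne_zero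
  set E : ℝ → ℂ := fun u => Complex.exp (-(Real.pi:ℂ) * c ^ 2 * u ^ 2 - 2 * Real.pi * Complex.I * u) with hE
  set f : ℕ → ℝ → ℂ := fun j u => ((b:ℂ) + Complex.I * c * u) ^ j * E u with hf
  set D : ℝ → ℂ := fun u => (k:ℂ) * ((b:ℂ) + Complex.I * c * u) ^ (k - 1) * (Complex.I * c) * E u
      + ((b:ℂ) + Complex.I * c * u) ^ k * (E u * (-(Real.pi:ℂ) * c ^ 2 * (2 * u) - 2 * Real.pi * Complex.I)) with hD
  have hderiv : ∀ u : ℝ, HasDerivAt (fun x : ℝ => f k x) (D u) u := by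
    intro u
    have h1 : HasDerivAt (fun z : ℂ => (b:ℂ) + Complex.I * c * z) (Complex.I * c) (u:ℂ) := by
      simpa using ((hasDerivAt_id (u:ℂ)).const_mul (Complex.I * (c:ℂ))).const_add (b:ℂ)
    have h2 := h1.pow k
    have h3 : HasDerivAt (fun z : ℂ => -(Real.pi:ℂ) * c ^ 2 * z ^ 2 - 2 * Real.pi * Complex.I * z)
        (-(Real.pi:ℂ) * c ^ 2 * (2 * u) - 2 * Real.pi * Complex.I) (u:ℂ) := by
      have ha := (hasDerivAt_pow 2 (u:ℂ)).const_mul (-(Real.pi:ℂ) * c ^ 2)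
      have hb := ((hasDerivAt_id (u:ℂ)).const_mul (2 * (Real.pi:ℂ) * Complex.I))
      have hab := ha.sub hb
      convert hab using 1
      · rfl
      · rfl
      · funext z; simp
      · norm_num
    have h4 := h3.cexp
    have h5 := h2.mul h4
    have h6 := h5.comp_ofReal
    convert h6 using 1
    rfl
    simp only [hD, hE, Pi.pow_apply]
  have hrep : ∀ u : ℝ, D u = ((k:ℂ) * (Complex.I * c)) * f (k - 1) u
      + (2 * Real.pi * Complex.I * c) * f (k + 1) u
      - (2 * Real.pi * Complex.I * ((c:ℂ) * b + 1)) * f k u := by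
    intro u
    simp only [hD, hf]
    rw [pow_succ]
    linear_combination (-2 * Real.pi * c^2 * (u:ℂ) * ((b:ℂ) + Complex.I * c * u) ^ k * E u) * Complex.I_sq
  have hDint : Integrable D := by
    refine (((((integ b c hc (k-1)).const_mul _).add
      ((integ b c hc (k+1)).const_mul _)).sub
      ((integ b c hc k).const_mul _)).congr
      (Filter.Eventually.of_forall (fun u => (hrep u).symm)))
  have hX : Integrable (fun u : ℝ => ((k:ℂ) * (Complex.I * c)) * f (k - 1) u) := by
    exact (integ b c hc (k-1)).const_mul _
  have hY : Integrable (fun u : ℝ => (2 * (Real.pi:ℂ) * Complex.I * c) * f (k + 1) u) := by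
    exact (integ b c hc (k+1)).const_mul _
  have hZ : Integrable (fun u : ℝ => (2 * (Real.pi:ℂ) * Complex.I * ((c:ℂ) * b + 1)) * f k u) := by
    exact (integ b c hc k).const_mul _
  have hYZ : Integrable (fun u : ℝ => (2 * (Real.pi:ℂ) * Complex.I * c) * f (k + 1) u
      - (2 * (Real.pi:ℂ) * Complex.I * ((c:ℂ) * b + 1)) * f k u) := hY.sub hZ
  have hzero : ∫ u : ℝ, D u = 0 :=
    integral_eq_zero_of_hasDerivAt_of_integrable hderiv hDint (integ b c hc k)
  set A := ∫ u : ℝ, f (k - 1) u with hA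
  set B := ∫ u : ℝ, f (k + 1) u with hB
  set C := ∫ u : ℝ, f k u with hC
  have expand : ∫ u : ℝ, D u = ((k:ℂ) * (Complex.I * c)) * A
      + ((2 * (Real.pi:ℂ) * Complex.I * c) * B - (2 * (Real.pi:ℂ) * Complex.I * ((c:ℂ) * b + 1)) * C) := by
    rw [integral_congr_ae (Filter.Eventually.of_forall (fun u => by
      rw [hrep u]; ring :
      ∀ u : ℝ, D u = ((k:ℂ) * (Complex.I * c)) * f (k - 1) u
        + ((2 * (Real.pi:ℂ) * Complex.I * c) * f (k + 1) u
          - (2 * (Real.pi:ℂ) * Complex.I * ((c:ℂ) * b + 1)) * f k u)))]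
    rw [integral_add hX hYZ, integral_sub hY hZ,
      integral_const_mul, integral_const_mul, integral_const_mul]
  rw [expand] at hzero
  show B = ((b:ℂ) + (c:ℂ)⁻¹) * C - ((k:ℂ) / (2 * Real.pi)) * A
  field_simp
  linear_combination (-Complex.I) * hzero + (2*Real.pi*(c:ℂ)*B - 2*Real.pi*(c:ℂ)*(b:ℂ)*C + (c:ℂ)*(k:ℂ)*A - 2*Real.pi*C) * Complex.I_sq

lemma hrpow (x : ℝ) : (4*Real.pi) ^ (-(x+1)/2) = (4*Real.pi) ^ (-x/2) * (2*Real.sqrt Real.pi)⁻¹ := by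
  have h4 : (0:ℝ) < 4*Real.pi := by positivity
  rw [show -(x+1)/2 = -x/2 + (-(1/2):ℝ) by ring, Real.rpow_add h4]
  congr 1
  rw [show (-(1/2):ℝ) = -(1/2 : ℝ) from rfl, Real.rpow_neg h4.le]
  congr 1
  rw [← Real.sqrt_eq_rpow]
  rw [show (4*Real.pi) = 2^2*Real.pi by norm_num, Real.sqrt_mul (by positivity), Real.sqrt_sq (by norm_num)]

lemma Rstep (b c : ℝ) (hc : 0 < c) (k : ℕ) :
    (4*Real.pi) ^ (-((k:ℝ)+2)/2) * c⁻¹ * hermiteH (k+2) (Real.sqrt Real.pi * (b+c⁻¹)) * Real.exp (-(Real.pi * c⁻¹^2))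
    = (b + c⁻¹) * ((4*Real.pi) ^ (-((k:ℝ)+1)/2) * c⁻¹ * hermiteH (k+1) (Real.sqrt Real.pi * (b+c⁻¹)) * Real.exp (-(Real.pi * c⁻¹^2)))
      - ((k:ℝ)+1)/(2*Real.pi) * ((4*Real.pi) ^ (-(k:ℝ)/2) * c⁻¹ * hermiteH k (Real.sqrt Real.pi * (b+c⁻¹)) * Real.exp (-(Real.pi * c⁻¹^2))) := by
  have hs : 0 < Real.sqrt Real.pi := Real.sqrt_pos.mpr Real.pi_pos
  have hherm := hermiteH_succ (k+1) (Real.sqrt Real.pi * (b+c⁻¹))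
  rw [Nat.add_sub_cancel] at hherm
  rw [show (-((k:ℝ)+2)/2) = (-(((k:ℝ)+1)+1)/2) by ring, hrpow ((k:ℝ)+1), hrpow (k:ℝ)]
  rw [show ((k:ℕ)+1+1 : ℕ) = k + 2 from rfl] at hherm
  rw [hherm]
  set s := Real.sqrt Real.pi with hsdef
  have hs2 : s ^ 2 = Real.pi := Real.sq_sqrt Real.pi_pos.le
  set p := (4*Real.pi) ^ (-(k:ℝ)/2) with hp
  set G := Real.exp (-(Real.pi * c⁻¹^2)) with hG
  rw [← hs2]
  push_cast
  field_simp

lemma main (b c : ℝ) (hc : 0 < c) (n : ℕ) :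
    (∫ u : ℝ, ((b:ℂ) + Complex.I * c * u) ^ n *
        Complex.exp (-(Real.pi:ℂ) * c ^ 2 * u ^ 2 - 2 * Real.pi * Complex.I * u))
      = (((4*Real.pi) ^ (-(n:ℝ)/2) * c⁻¹ * hermiteH n (Real.sqrt Real.pi * (b + c⁻¹))
          * Real.exp (-(Real.pi * c⁻¹^2)) : ℝ) : ℂ) := by
  have hs : 0 < Real.sqrt Real.pi := Real.sqrt_pos.mpr Real.pi_pos
  have hs2 : Real.sqrt Real.pi ^ 2 = Real.pi := Real.sq_sqrt Real.pi_pos.le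
  set R : ℕ → ℝ := fun k => (4*Real.pi) ^ (-(k:ℝ)/2) * c⁻¹ * hermiteH k (Real.sqrt Real.pi * (b + c⁻¹))
      * Real.exp (-(Real.pi * c⁻¹^2)) with hR
  suffices h : ∀ k : ℕ, (∫ u : ℝ, ((b:ℂ) + Complex.I * c * u) ^ k *
        Complex.exp (-(Real.pi:ℂ) * c ^ 2 * u ^ 2 - 2 * Real.pi * Complex.I * u)) = ((R k : ℝ) : ℂ) by
    exact h n
  have hP0 : (∫ u : ℝ, ((b:ℂ) + Complex.I * c * u) ^ 0 *
      Complex.exp (-(Real.pi:ℂ) * c ^ 2 * u ^ 2 - 2 * Real.pi * Complex.I * u)) = ((R 0 : ℝ) : ℂ) := by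
    simp only [pow_zero, one_mul]
    rw [base c hc]
    congr 1
    rw [hR]
    simp [hermiteH_zero]
  have key : ∀ k : ℕ, (∫ u : ℝ, ((b:ℂ) + Complex.I * c * u) ^ k *
        Complex.exp (-(Real.pi:ℂ) * c ^ 2 * u ^ 2 - 2 * Real.pi * Complex.I * u)) = ((R k : ℝ) : ℂ)
      ∧ (∫ u : ℝ, ((b:ℂ) + Complex.I * c * u) ^ (k+1) *
        Complex.exp (-(Real.pi:ℂ) * c ^ 2 * u ^ 2 - 2 * Real.pi * Complex.I * u)) = ((R (k+1) : ℝ) : ℂ) := by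
    intro k
    induction k with
    | zero =>
      refine ⟨hP0, ?_⟩
      have hr := recur b c hc 0
      simp only [Nat.cast_zero, zero_div, zero_mul, sub_zero, zero_add] at hr
      rw [hr, hP0]
      rw [show ((b:ℂ) + (c:ℂ)⁻¹) = (((b + c⁻¹ : ℝ)) : ℂ) by push_cast; ring, ← Complex.ofReal_mul]
      congr 1
      rw [hR]
      have h1 : hermiteH 1 (Real.sqrt Real.pi * (b + c⁻¹))
          = 2 * (Real.sqrt Real.pi * (b + c⁻¹)) := by
        have := hermiteH_succ 0 (Real.sqrt Real.pi * (b + c⁻¹))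
        simpa [hermiteH_zero] using this
      have eN : ∀ j : ℕ, (4*Real.pi) ^ (-((j+1:ℕ):ℝ)/2)
          = (4*Real.pi) ^ (-((j:ℕ):ℝ)/2) * (2*Real.sqrt Real.pi)⁻¹ := by
        intro j
        rw [show -(((j+1:ℕ)):ℝ)/2 = -((j:ℝ)+1)/2 by push_cast; ring]
        exact hrpow _
      have e0 : (4*Real.pi) ^ (-((0:ℕ):ℝ)/2) = 1 := by norm_num
      simp only [hR]
      rw [eN 0, e0, h1, hermiteH_zero]
      field_simp
    | succ m ih =>
      refine ⟨ih.2, ?_⟩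
      have hr := recur b c hc (m+1)
      rw [Nat.add_sub_cancel] at hr
      rw [hr, ih.1, ih.2]
      rw [show ((b:ℂ) + (c:ℂ)⁻¹) = (((b + c⁻¹ : ℝ)) : ℂ) by push_cast; ring]
      rw [show (((m+1:ℕ):ℂ) / (2 * (Real.pi:ℂ))) = ((((m+1:ℕ):ℝ) / (2 * Real.pi) : ℝ) : ℂ) by push_cast; ring]
      rw [← Complex.ofReal_mul, ← Complex.ofReal_mul, ← Complex.ofReal_sub]
      congr 1
      have := Rstep b c hc m
      rw [hR]
      push_cast
      push_cast at this
      rw [show -((m:ℝ)+1+1)/2 = -((m:ℝ)+2)/2 by ring]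
      linarith [this]
  exact fun k => (key k).1

theorem stmt_13 (t₁ t₂ a₂ : ℝ) (h₁ : 0 < t₁) (h₂ : 0 < t₂) (h₃ : 0 < a₂) (n : ℕ) :
    ∫ u : ℝ, (((t₂⁻¹ * a₂ : ℝ) : ℂ) + Complex.I * ((t₁⁻¹ * t₂⁻¹ * a₂ * u : ℝ) : ℂ)) ^ n *
        Complex.exp (-(Real.pi : ℂ) * ((t₁⁻¹ ^ 2 * t₂⁻¹ ^ 2 * a₂ ^ 2 * u ^ 2 : ℝ) : ℂ) -
          2 * (Real.pi : ℂ) * Complex.I * (u : ℂ))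
      = ((4 * Real.pi : ℝ) : ℂ) ^ (-(n : ℂ) / 2) * ((t₁ * t₂ * a₂⁻¹ : ℝ) : ℂ) *
          hermiteH n (Real.sqrt Real.pi * (t₂⁻¹ * a₂ + t₁ * t₂ * a₂⁻¹)) *
          Real.exp (-Real.pi * (t₁ ^ 2 * t₂ ^ 2 * a₂⁻¹ ^ 2)) := by
  set b : ℝ := t₂⁻¹ * a₂ with hb
  set c : ℝ := t₁⁻¹ * t₂⁻¹ * a₂ with hc
  have hcpos : 0 < c := by positivity
  have hcinv : c⁻¹ = t₁ * t₂ * a₂⁻¹ := by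
    rw [hc, mul_inv, mul_inv, inv_inv, inv_inv]
  have heq : ∀ u : ℝ, (((t₂⁻¹ * a₂ : ℝ) : ℂ) + Complex.I * ((t₁⁻¹ * t₂⁻¹ * a₂ * u : ℝ) : ℂ)) ^ n *
        Complex.exp (-(Real.pi : ℂ) * ((t₁⁻¹ ^ 2 * t₂⁻¹ ^ 2 * a₂ ^ 2 * u ^ 2 : ℝ) : ℂ) -
          2 * (Real.pi : ℂ) * Complex.I * (u : ℂ))
      = ((b:ℂ) + Complex.I * c * u) ^ n *
        Complex.exp (-(Real.pi:ℂ) * c ^ 2 * u ^ 2 - 2 * Real.pi * Complex.I * u) := by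
    intro u
    rw [hb, hc]
    congr 2
    · push_cast; ring
    · push_cast; ring
  rw [integral_congr_ae (Filter.Eventually.of_forall heq), main b c hcpos n]
  have hcpow : ((4 * Real.pi : ℝ) : ℂ) ^ (-(n : ℂ) / 2)
      = (((4 * Real.pi) ^ (-(n:ℝ)/2) : ℝ) : ℂ) := by
    rw [Complex.ofReal_cpow (by positivity)]
    push_cast
    ring_nf
  rw [hcpow]
  rw [← hcinv]
  push_cast
  have hcinvC : ((c:ℝ):ℂ)⁻¹ = (t₁:ℂ) * t₂ * (a₂:ℂ)⁻¹ := by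
    rw [← Complex.ofReal_inv, hcinv]; push_cast; ring
  have hexp : Complex.exp (-((Real.pi:ℂ) * ((c:ℝ):ℂ)⁻¹ ^ 2))
      = Complex.exp (-(Real.pi:ℂ) * ((t₁:ℂ) ^ 2 * (t₂:ℂ) ^ 2 * ((a₂:ℝ):ℂ)⁻¹ ^ 2)) := by
    congr 1
    rw [hcinvC]
    ring
  rw [hexp]
end
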